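/- arXiv:2209.12288 — 5 statements merged into one kernel-verified Lean document; each statement's English description precedes it below -/
import Mathlib

section
/- Let A, Â ∈ ℝ^{m×n}, and let I_1,...,I_s partition {1,...,m} and J_1,...,J_t partition {1,...,n}. Suppose that for all p, q: (a) ∑_{j∈J_q} A_{i,j} = ∑_{j∈J_q} Â_{i,j} and this value is independent of i ∈ I_p; (b) ∑_{i∈I_p} A_{i,j} = ∑_{i∈I_p} Â_{i,j} and this value is independent of j ∈ J_q. If x ∈ ℝ^n and x̂ is defined by block-averaging x over the partition {J_q} (x̂_j = (1/|J_q|)∑_{j'∈J_q} x_{j'} for j ∈ J_q), then for every i ∈ {1,...,m}, (Â x̂)_i = (1/|I_p|) ∑_{i'∈I_p} (A x)_{i'}, where I_p is the block containing i. -/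
/-- Averaging lemma behind the WL-test argument: if the row/column block sums of
`A` and `Â` agree (and are constant on blocks), then `(Â x̂)_i` equals the
block-average of `(A x)` over the row block containing `i`. -/
theorem stmt3 {m n s t : ℕ} (A Ahat : Fin m → Fin n → ℝ)
    (ρ : Fin m → Fin s) (κ : Fin n → Fin t)
    (hρ : Function.Surjective ρ) (hκ : Function.Surjective κ)
    (hrow : ∀ i i', ρ i = ρ i' → ∀ q,
      ∑ j ∈ Finset.univ.filter (fun j => κ j = q), A i j =
      ∑ j ∈ Finset.univ.filter (fun j => κ j = q), A i' j)
    (hrowhat : ∀ i q,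
      ∑ j ∈ Finset.univ.filter (fun j => κ j = q), A i j =
      ∑ j ∈ Finset.univ.filter (fun j => κ j = q), Ahat i j)
    (hcol : ∀ j j', κ j = κ j' → ∀ p,
      ∑ i ∈ Finset.univ.filter (fun i => ρ i = p), A i j =
      ∑ i ∈ Finset.univ.filter (fun i => ρ i = p), A i j')
    (hcolhat : ∀ j p,
      ∑ i ∈ Finset.univ.filter (fun i => ρ i = p), A i j =
      ∑ i ∈ Finset.univ.filter (fun i => ρ i = p), Ahat i j)
    (x xhat : Fin n → ℝ)
    (hxhat : ∀ j, xhat j =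
      (∑ j' ∈ Finset.univ.filter (fun j' => κ j' = κ j), x j') /
        (Finset.univ.filter (fun j' => κ j' = κ j)).card) :
    ∀ i, ∑ j, Ahat i j * xhat j =
      (∑ i' ∈ Finset.univ.filter (fun i' => ρ i' = ρ i), ∑ j, A i' j * x j) /
        (Finset.univ.filter (fun i' => ρ i' = ρ i)).card := by

  classical
  intro i
  set p := ρ i with hp
  set Ip : Finset (Fin m) := Finset.univ.filter (fun i' => ρ i' = p) with hIp
  set Jq : Fin t → Finset (Fin n) := fun q => Finset.univ.filter (fun j => κ j = q) with hJq
  have hiIp : i ∈ Ip := by simp [hIp, hp]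
  have hM : (0:ℝ) < Ip.card := by
    exact_mod_cast Finset.card_pos.mpr ⟨i, hiIp⟩
  have hN : ∀ q, (0:ℝ) < ((Jq q).card : ℝ) := by
    intro q
    obtain ⟨j, hj⟩ := hκ q
    exact_mod_cast Finset.card_pos.mpr ⟨j, by simp [hJq, hj]⟩
  set S : Fin t → ℝ := fun q => ∑ j ∈ Jq q, x j with hS
  set C : Fin t → ℝ := fun q => ∑ j ∈ Jq q, A i j with hC
  choose jrep hjrep using hκ
  set D : Fin t → ℝ := fun q => ∑ i' ∈ Ip, A i' (jrep q) with hD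
  have hDj : ∀ j, ∑ i' ∈ Ip, A i' j = D (κ j) := by
    intro j
    rw [hD]
    exact hcol j (jrep (κ j)) (by rw [hjrep]) p
  have key : ∀ q, C q * Ip.card = D q * (Jq q).card := by
    intro q
    have h1 : ∑ i' ∈ Ip, ∑ j ∈ Jq q, A i' j = Ip.card * C q := by
      have h : ∀ i' ∈ Ip, ∑ j ∈ Jq q, A i' j = C q := by
        intro i' hi'
        rw [hC]
        exact hrow i' i (by simpa [hIp] using hi') q
      rw [Finset.sum_congr rfl h, Finset.sum_const, nsmul_eq_mul]
    have h2 : ∑ i' ∈ Ip, ∑ j ∈ Jq q, A i' j = (Jq q).card * D q := by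
      rw [Finset.sum_comm]
      have h : ∀ j ∈ Jq q, ∑ i' ∈ Ip, A i' j = D q := by
        intro j hj
        rw [hDj j]
        congr 1
        simpa [hJq] using hj
      rw [Finset.sum_congr rfl h, Finset.sum_const, nsmul_eq_mul]
    rw [mul_comm (C q), ← h1, h2, mul_comm]
  have hLHS : ∑ j, Ahat i j * xhat j = ∑ q, C q * S q / (Jq q).card := by
    rw [← Finset.sum_fiberwise Finset.univ κ (fun j => Ahat i j * xhat j)]
    refine Finset.sum_congr rfl fun q _ => ?_
    have h : ∀ j ∈ Jq q, Ahat i j * xhat j = Ahat i j * (S q / (Jq q).card) := by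
      intro j hj
      have hjq : κ j = q := by simpa [hJq] using hj
      rw [hxhat j, hjq, hS]
    rw [Finset.sum_congr rfl h, ← Finset.sum_mul, ← hrowhat i q, hC, mul_div_assoc]
  have hRHS : ∑ i' ∈ Ip, ∑ j, A i' j * x j = ∑ q, D q * S q := by
    rw [Finset.sum_comm]
    have h : ∀ j, ∑ i' ∈ Ip, A i' j * x j = D (κ j) * x j := by
      intro j
      rw [← hDj j, Finset.sum_mul]
    rw [Finset.sum_congr rfl (fun j _ => h j),
      ← Finset.sum_fiberwise Finset.univ κ (fun j => D (κ j) * x j)]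
    refine Finset.sum_congr rfl fun q _ => ?_
    have h2 : ∀ j ∈ Jq q, D (κ j) * x j = D q * x j := by
      intro j hj
      have hjq : κ j = q := by simpa [hJq] using hj
      rw [hjq]
    rw [Finset.sum_congr rfl h2, ← Finset.mul_sum, hS]
  rw [hLHS, hRHS, Finset.sum_div]
  refine Finset.sum_congr rfl fun q _ => ?_
  have hNq := hN q
  field_simp
  linear_combination S q * key q
end

section
/- Consider two LPs min c^T x s.t. Ax ∘ b, l ≤ x ≤ u and min ĉ^T x s.t. Âx ∘̂ b̂, l̂ ≤ x ≤ û, where ∘ ∈ {≤, =, ≥}^m componentwise. Suppose there is a stable partition pair (I_1,...,I_s of rows, J_1,...,J_t of columns) such that: (b_i, ∘_i) = (b̂_i, ∘̂_i) is constant on each I_p; (c_j, l_j, u_j) = (ĉ_j, l̂_j, û_j) is constant on each J_q; and the row/column block sums of A and Â agree as in the stable-partition conditions. Then if x is feasible for the first LP, the block-average x̂ (x̂_j = (1/|J_q|)∑_{j'∈J_q} x_{j'} for j ∈ J_q) is feasible for the second LP. In particular, the first LP is feasible if and only if the second LP is feasible. -/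
/-- Constraint relation `∘ᵢ ∈ {≤, =, ≥}`. -/
def cRel : Ordering → ℝ → ℝ → Prop
  | Ordering.lt => fun a b => a ≤ b
  | Ordering.eq => fun a b => a = b
  | Ordering.gt => fun a b => a ≥ b

/-- Feasibility of `x` for the LP with data `(A, b, l, u, ∘)`:
`Ax ∘ b` componentwise and `l ≤ x ≤ u`. -/
def Feas {m n : ℕ} (A : Fin m → Fin n → ℝ) (b : Fin m → ℝ) (l u : Fin n → ℝ)
    (o : Fin m → Ordering) (x : Fin n → ℝ) : Prop :=
  (∀ i, cRel (o i) (∑ j, A i j * x j) (b i)) ∧ ∀ j, l j ≤ x j ∧ x j ≤ u j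

/-- Block average of `x` over the column partition given by the fibers of `κ`. -/
noncomputable def blockAvg {n t : ℕ} (κ : Fin n → Fin t) (x : Fin n → ℝ) : Fin n → ℝ :=
  fun j => (∑ j' ∈ Finset.univ.filter (fun j' => κ j' = κ j), x j') /
    (Finset.univ.filter (fun j' => κ j' = κ j)).card

lemma transfer {m n s t : ℕ}
    (A Ahat : Fin m → Fin n → ℝ) (b : Fin m → ℝ)
    (l u : Fin n → ℝ) (o : Fin m → Ordering)
    (ρ : Fin m → Fin s) (κ : Fin n → Fin t)
    (hκ : Function.Surjective κ)
    (hVconst : ∀ i i', ρ i = ρ i' → b i = b i' ∧ o i = o i')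
    (hWconst : ∀ j j', κ j = κ j' → l j = l j' ∧ u j = u j')
    (hrow : ∀ i i', ρ i = ρ i' → ∀ q,
      ∑ j ∈ Finset.univ.filter (fun j => κ j = q), A i j =
      ∑ j ∈ Finset.univ.filter (fun j => κ j = q), A i' j)
    (hrowhat : ∀ i q,
      ∑ j ∈ Finset.univ.filter (fun j => κ j = q), A i j =
      ∑ j ∈ Finset.univ.filter (fun j => κ j = q), Ahat i j)
    (hcol : ∀ j j', κ j = κ j' → ∀ p,
      ∑ i ∈ Finset.univ.filter (fun i => ρ i = p), A i j =
      ∑ i ∈ Finset.univ.filter (fun i => ρ i = p), A i j')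
    (x : Fin n → ℝ) (hx : Feas A b l u o x) :
    Feas Ahat b l u o (blockAvg κ x) := by
  constructor
  · intro i
    set I : Finset (Fin m) := Finset.univ.filter (fun i' => ρ i' = ρ i) with hI
    have hIne : (I).Nonempty := ⟨i, by simp [hI]⟩
    have hnp : (0:ℝ) < (I.card : ℝ) := by exact_mod_cast Finset.card_pos.mpr hIne
    -- key identity
    have key : ∑ j, Ahat i j * blockAvg κ x j
        = (∑ i' ∈ I, ∑ j, A i' j * x j) / (I.card : ℝ) := by
      rw [eq_div_iff (ne_of_gt hnp)]
      have lhs_fib : ∑ j, Ahat i j * blockAvg κ x j =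
          ∑ q : Fin t, ∑ j ∈ Finset.univ.filter (fun j => κ j = q),
            Ahat i j * blockAvg κ x j := (Finset.sum_fiberwise _ _ _).symm
      have rhs_fib : ∀ i', ∑ j, A i' j * x j =
          ∑ q : Fin t, ∑ j ∈ Finset.univ.filter (fun j => κ j = q),
            A i' j * x j := fun i' => (Finset.sum_fiberwise _ _ _).symm
      rw [lhs_fib]
      conv_rhs => rw [Finset.sum_congr rfl (fun i' _ => rhs_fib i')]
      rw [Finset.sum_comm, Finset.sum_mul]
      refine Finset.sum_congr rfl fun q _ => ?_
      set J : Finset (Fin n) := Finset.univ.filter (fun j => κ j = q) with hJ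
      obtain ⟨j0, hj0⟩ := hκ q
      have hJne : J.Nonempty := ⟨j0, by simp [hJ, hj0]⟩
      have hnq : (0:ℝ) < (J.card : ℝ) := by exact_mod_cast Finset.card_pos.mpr hJne
      set S : ℝ := ∑ j ∈ J, x j with hS
      -- blockAvg is constant S / |J| on J
      have havg : ∀ j ∈ J, blockAvg κ x j = S / (J.card : ℝ) := by
        intro j hj
        have hκj : κ j = q := by simpa [hJ] using hj
        simp [blockAvg, hJ, hκj, hS]
      set R : ℝ := ∑ j ∈ J, A i j with hR
      have lhsq : ∑ j ∈ J, Ahat i j * blockAvg κ x j = R * (S / (J.card : ℝ)) := by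
        rw [Finset.sum_congr rfl (fun j hj => by rw [havg j hj]), ← Finset.sum_mul,
          ← hrowhat i q]
      set T : ℝ := ∑ i' ∈ I, A i' j0 with hT
      have hTconst : ∀ j ∈ J, ∑ i' ∈ I, A i' j = T := by
        intro j hj
        have hκj : κ j = κ j0 := by
          have : κ j = q := by simpa [hJ] using hj
          rw [this, hj0]
        exact hcol j j0 hκj (ρ i)
      have hRconst : ∀ i' ∈ I, ∑ j ∈ J, A i' j = R := by
        intro i' hi'
        have : ρ i' = ρ i := by simpa [hI] using hi'
        rw [hR, hJ]; exact hrow i' i this q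
      -- double counting
      have hdc : (J.card : ℝ) * T = (I.card : ℝ) * R := by
        have h1 : ∑ j ∈ J, ∑ i' ∈ I, A i' j = (J.card : ℝ) * T := by
          rw [Finset.sum_congr rfl hTconst, Finset.sum_const, nsmul_eq_mul]
        have h2 : ∑ j ∈ J, ∑ i' ∈ I, A i' j = (I.card : ℝ) * R := by
          rw [Finset.sum_comm, Finset.sum_congr rfl hRconst, Finset.sum_const,
            nsmul_eq_mul]
        rw [← h1, h2]
      have rhsq : ∑ i' ∈ I, ∑ j ∈ J, A i' j * x j = T * S := by
        rw [Finset.sum_comm]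
        have : ∀ j ∈ J, ∑ i' ∈ I, A i' j * x j = T * x j := by
          intro j hj
          rw [← Finset.sum_mul, hTconst j hj]
        rw [Finset.sum_congr rfl this, ← Finset.mul_sum]
      rw [lhsq, rhsq]
      field_simp
      linear_combination S * hdc.symm
    rw [key]
    have hrel : ∀ i' ∈ I, cRel (o i) (∑ j, A i' j * x j) (b i) := by
      intro i' hi'
      have hρi : ρ i' = ρ i := by simpa [hI] using hi'
      obtain ⟨hb', ho'⟩ := hVconst i' i hρi
      rw [← hb', ← ho']
      exact hx.1 i'
    cases hoi : o i with
    | lt =>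
      simp only [cRel]
      rw [div_le_iff₀ hnp]
      calc ∑ i' ∈ I, ∑ j, A i' j * x j ≤ I.card • b i :=
            Finset.sum_le_card_nsmul I _ (b i) (fun i' hi' => by
              have := hrel i' hi'; rwa [hoi] at this)
        _ = b i * I.card := by rw [nsmul_eq_mul]; ring
    | eq =>
      simp only [cRel]
      rw [div_eq_iff (ne_of_gt hnp)]
      have : ∀ i' ∈ I, ∑ j, A i' j * x j = b i := fun i' hi' => by
        have := hrel i' hi'; rwa [hoi] at this
      rw [Finset.sum_congr rfl this, Finset.sum_const, nsmul_eq_mul]; ring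
    | gt =>
      simp only [cRel, ge_iff_le]
      rw [le_div_iff₀ hnp]
      calc b i * I.card = I.card • b i := by rw [nsmul_eq_mul]; ring
        _ ≤ ∑ i' ∈ I, ∑ j, A i' j * x j :=
            Finset.card_nsmul_le_sum I _ (b i) (fun i' hi' => by
              have := hrel i' hi'; rwa [hoi] at this)
  · intro j
    set J : Finset (Fin n) := Finset.univ.filter (fun j' => κ j' = κ j) with hJ
    have hjmem : j ∈ J := by simp [hJ]
    have hnq : (0:ℝ) < (J.card : ℝ) := by
      exact_mod_cast Finset.card_pos.mpr ⟨j, hjmem⟩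
    have havg : blockAvg κ x j = (∑ j' ∈ J, x j') / (J.card : ℝ) := rfl
    rw [havg]
    constructor
    · rw [le_div_iff₀ hnq]
      calc l j * (J.card : ℝ) = J.card • l j := by rw [nsmul_eq_mul]; ring
        _ ≤ ∑ j' ∈ J, x j' := Finset.card_nsmul_le_sum J _ (l j) (fun j' hj' => by
            have hκ' : κ j' = κ j := by simpa [hJ] using hj'
            rw [← (hWconst j' j hκ').1]
            exact (hx.2 j').1)
    · rw [div_le_iff₀ hnq]
      calc ∑ j' ∈ J, x j' ≤ J.card • u j :=
            Finset.sum_le_card_nsmul J _ (u j) (fun j' hj' => by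
              have hκ' : κ j' = κ j := by simpa [hJ] using hj'
              rw [← (hWconst j' j hκ').2]
              exact (hx.2 j').2)
        _ = u j * (J.card : ℝ) := by rw [nsmul_eq_mul]; ring

/-- Feasibility transfer between two LPs related by a stable partition pair:
if `x` is feasible for the first LP, its block average is feasible for the
second; in particular the two LPs are feasible simultaneously. -/
theorem stmt4 {m n s t : ℕ}
    (A Ahat : Fin m → Fin n → ℝ) (b bhat : Fin m → ℝ)
    (c chat l lhat u uhat : Fin n → ℝ) (o ohat : Fin m → Ordering)
    (ρ : Fin m → Fin s) (κ : Fin n → Fin t)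
    (hρ : Function.Surjective ρ) (hκ : Function.Surjective κ)
    (hb : ∀ i, b i = bhat i) (ho : ∀ i, o i = ohat i)
    (hVconst : ∀ i i', ρ i = ρ i' → b i = b i' ∧ o i = o i')
    (hc : ∀ j, c j = chat j) (hl : ∀ j, l j = lhat j) (hu : ∀ j, u j = uhat j)
    (hWconst : ∀ j j', κ j = κ j' → c j = c j' ∧ l j = l j' ∧ u j = u j')
    (hrow : ∀ i i', ρ i = ρ i' → ∀ q,
      ∑ j ∈ Finset.univ.filter (fun j => κ j = q), A i j =
      ∑ j ∈ Finset.univ.filter (fun j => κ j = q), A i' j)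
    (hrowhat : ∀ i q,
      ∑ j ∈ Finset.univ.filter (fun j => κ j = q), A i j =
      ∑ j ∈ Finset.univ.filter (fun j => κ j = q), Ahat i j)
    (hcol : ∀ j j', κ j = κ j' → ∀ p,
      ∑ i ∈ Finset.univ.filter (fun i => ρ i = p), A i j =
      ∑ i ∈ Finset.univ.filter (fun i => ρ i = p), A i j')
    (hcolhat : ∀ j p,
      ∑ i ∈ Finset.univ.filter (fun i => ρ i = p), A i j =
      ∑ i ∈ Finset.univ.filter (fun i => ρ i = p), Ahat i j) :
    (∀ x : Fin n → ℝ, Feas A b l u o x → Feas Ahat bhat lhat uhat ohat (blockAvg κ x)) ∧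
    ((∃ x, Feas A b l u o x) ↔ ∃ x, Feas Ahat bhat lhat uhat ohat x) := by
  obtain rfl : b = bhat := funext hb
  obtain rfl : o = ohat := funext ho
  obtain rfl : l = lhat := funext hl
  obtain rfl : u = uhat := funext hu
  have hW' : ∀ j j', κ j = κ j' → l j = l j' ∧ u j = u j' := fun j j' h =>
    ⟨(hWconst j j' h).2.1, (hWconst j j' h).2.2⟩
  have fwd : ∀ x : Fin n → ℝ, Feas A b l u o x → Feas Ahat b l u o (blockAvg κ x) :=
    transfer A Ahat b l u o ρ κ hκ hVconst hW' hrow hrowhat hcol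
  have hrow' : ∀ i i', ρ i = ρ i' → ∀ q,
      ∑ j ∈ Finset.univ.filter (fun j => κ j = q), Ahat i j =
      ∑ j ∈ Finset.univ.filter (fun j => κ j = q), Ahat i' j := by
    intro i i' h q
    rw [← hrowhat i q, ← hrowhat i' q]
    exact hrow i i' h q
  have hcol' : ∀ j j', κ j = κ j' → ∀ p,
      ∑ i ∈ Finset.univ.filter (fun i => ρ i = p), Ahat i j =
      ∑ i ∈ Finset.univ.filter (fun i => ρ i = p), Ahat i j' := by
    intro j j' h p
    rw [← hcolhat j p, ← hcolhat j' p]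
    exact hcol j j' h p
  have bwd : ∀ x : Fin n → ℝ, Feas Ahat b l u o x → Feas A b l u o (blockAvg κ x) :=
    transfer Ahat A b l u o ρ κ hκ hVconst hW' hrow'
      (fun i q => (hrowhat i q).symm) hcol'
  exact ⟨fwd, ⟨fun ⟨x, hx⟩ => ⟨_, fwd x hx⟩, fun ⟨x, hx⟩ => ⟨_, bwd x hx⟩⟩⟩
end

section
/- Under the same stable partition pair hypothesis relating two LPs (including c_j = ĉ_j constant on each column block J_q), for any feasible x of the first LP and its block-average x̂: c^T x = ĉ^T x̂. Consequently the two WL-indistinguishable LPs have the same optimal objective value (allowing the values +∞ for infeasible and −∞ for unbounded). -/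
set_option linter.unusedVariables false

lemma cRel_avg {ι : Type*} (S : Finset ι) (hS : S.Nonempty) (v : ι → ℝ) (β : ℝ)
    (ord : Ordering) (h : ∀ i ∈ S, cRel ord (v i) β) :
    cRel ord ((∑ i ∈ S, v i) / S.card) β := by
  have hc : (0:ℝ) < S.card := by exact_mod_cast Finset.card_pos.mpr hS
  cases ord with
  | lt =>
    simp only [cRel] at h ⊢
    rw [div_le_iff₀ hc]
    calc ∑ i ∈ S, v i ≤ ∑ i ∈ S, β := Finset.sum_le_sum h
      _ = β * S.card := by rw [Finset.sum_const, nsmul_eq_mul]; ring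
  | eq =>
    simp only [cRel] at h ⊢
    rw [Finset.sum_congr rfl h, Finset.sum_const, nsmul_eq_mul]
    field_simp
  | gt =>
    simp only [cRel, ge_iff_le] at h ⊢
    rw [le_div_iff₀ hc]
    calc β * S.card = ∑ i ∈ S, β := by rw [Finset.sum_const, nsmul_eq_mul]; ring
      _ ≤ ∑ i ∈ S, v i := Finset.sum_le_sum h

lemma blockAvg_eq {n t : ℕ} (κ : Fin n → Fin t) (x : Fin n → ℝ) (q : Fin t)
    (j : Fin n) (hj : κ j = q) :
    blockAvg κ x j = (∑ j' ∈ Finset.univ.filter (fun j' => κ j' = q), x j') /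
      (Finset.univ.filter (fun j' => κ j' = q)).card := by
  unfold blockAvg; rw [hj]

lemma avg_dot {n t : ℕ} (κ : Fin n → Fin t) (w x : Fin n → ℝ)
    (hw : ∀ j j', κ j = κ j' → w j = w j') :
    ∑ j, w j * blockAvg κ x j = ∑ j, w j * x j := by
  rw [← Finset.sum_fiberwise Finset.univ κ (fun j => w j * blockAvg κ x j),
      ← Finset.sum_fiberwise Finset.univ κ (fun j => w j * x j)]
  refine Finset.sum_congr rfl (fun q _ => ?_)
  set F := Finset.univ.filter (fun j => κ j = q) with hF
  rcases F.eq_empty_or_nonempty with he | ⟨j0, hj0⟩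
  · simp [he]
  · have hj0q : κ j0 = q := by simpa [hF] using hj0
    have hcard : (0:ℝ) < F.card := by exact_mod_cast Finset.card_pos.mpr ⟨j0, hj0⟩
    have hwc : ∀ j ∈ F, w j = w j0 := fun j hj =>
      hw j j0 (by rw [hj0q]; simpa [hF] using hj)
    have h1 : ∀ j ∈ F, w j * blockAvg κ x j = w j0 * ((∑ j' ∈ F, x j') / F.card) := by
      intro j hj
      rw [hwc j hj, blockAvg_eq κ x q j (by simpa [hF] using hj)]
    have h2 : ∀ j ∈ F, w j * x j = w j0 * x j := fun j hj => by rw [hwc j hj]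
    rw [Finset.sum_congr rfl h1, Finset.sum_congr rfl h2, Finset.sum_const,
        ← Finset.mul_sum, nsmul_eq_mul]
    field_simp

lemma feas_transfer {m n s t : ℕ}
    (A Ahat : Fin m → Fin n → ℝ) (b bhat : Fin m → ℝ)
    (l lhat u uhat : Fin n → ℝ) (o ohat : Fin m → Ordering)
    (ρ : Fin m → Fin s) (κ : Fin n → Fin t)
    (hκ : Function.Surjective κ)
    (hb : ∀ i, b i = bhat i) (ho : ∀ i, o i = ohat i)
    (hVconst : ∀ i i', ρ i = ρ i' → b i = b i' ∧ o i = o i')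
    (hl : ∀ j, l j = lhat j) (hu : ∀ j, u j = uhat j)
    (hWconst : ∀ j j', κ j = κ j' → l j = l j' ∧ u j = u j')
    (hrow : ∀ i i', ρ i = ρ i' → ∀ q,
      ∑ j ∈ Finset.univ.filter (fun j => κ j = q), A i j =
      ∑ j ∈ Finset.univ.filter (fun j => κ j = q), A i' j)
    (hrowhat : ∀ i q,
      ∑ j ∈ Finset.univ.filter (fun j => κ j = q), A i j =
      ∑ j ∈ Finset.univ.filter (fun j => κ j = q), Ahat i j)
    (hcol : ∀ j j', κ j = κ j' → ∀ p,
      ∑ i ∈ Finset.univ.filter (fun i => ρ i = p), A i j =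
      ∑ i ∈ Finset.univ.filter (fun i => ρ i = p), A i j')
    (x : Fin n → ℝ) (hx : Feas A b l u o x) :
    Feas Ahat bhat lhat uhat ohat (blockAvg κ x) := by
  have hNq : ∀ q : Fin t, (0:ℝ) < (Finset.univ.filter (fun j => κ j = q)).card := by
    intro q
    obtain ⟨j, hj⟩ := hκ q
    exact_mod_cast Finset.card_pos.mpr ⟨j, by simp [hj]⟩
  constructor
  · intro i
    rw [← ho i, ← hb i]
    set Fp := Finset.univ.filter (fun i' => ρ i' = ρ i) with hFp
    have hiFp : i ∈ Fp := by simp [hFp]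
    have hFpcard : (0:ℝ) < Fp.card := by exact_mod_cast Finset.card_pos.mpr ⟨i, hiFp⟩
    have hkey : ∑ j, Ahat i j * blockAvg κ x j
        = (∑ i' ∈ Fp, ∑ j, A i' j * x j) / Fp.card := by
      have hstep1 : ∑ j, Ahat i j * blockAvg κ x j
          = ∑ q : Fin t, (∑ j ∈ Finset.univ.filter (fun j => κ j = q), A i j) *
              ((∑ j ∈ Finset.univ.filter (fun j => κ j = q), x j) /
                (Finset.univ.filter (fun j => κ j = q)).card) := by
        rw [← Finset.sum_fiberwise Finset.univ κ (fun j => Ahat i j * blockAvg κ x j)]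
        refine Finset.sum_congr rfl (fun q _ => ?_)
        have h1 : ∀ j ∈ Finset.univ.filter (fun j => κ j = q),
            Ahat i j * blockAvg κ x j = Ahat i j *
              ((∑ j' ∈ Finset.univ.filter (fun j' => κ j' = q), x j') /
                (Finset.univ.filter (fun j' => κ j' = q)).card) := by
          intro j hj
          rw [blockAvg_eq κ x q j (by simpa using hj)]
        rw [Finset.sum_congr rfl h1, ← Finset.sum_mul, ← hrowhat i q]
      have hstep2 : ∑ i' ∈ Fp, ∑ j, A i' j * x j
          = ∑ q : Fin t, (Fp.card : ℝ) *
              ((∑ j ∈ Finset.univ.filter (fun j => κ j = q), A i j) *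
              ((∑ j ∈ Finset.univ.filter (fun j => κ j = q), x j) /
                (Finset.univ.filter (fun j => κ j = q)).card)) := by
        rw [Finset.sum_comm]
        have h0 : ∀ j : Fin n, ∑ i' ∈ Fp, A i' j * x j = (∑ i' ∈ Fp, A i' j) * x j :=
          fun j => (Finset.sum_mul _ _ _).symm
        rw [Finset.sum_congr rfl (fun j _ => h0 j),
          ← Finset.sum_fiberwise Finset.univ κ (fun j => (∑ i' ∈ Fp, A i' j) * x j)]
        refine Finset.sum_congr rfl (fun q _ => ?_)
        set Jq := Finset.univ.filter (fun j => κ j = q) with hJq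
        have hCj : ∀ j ∈ Jq, (∑ i' ∈ Fp, A i' j)
            = (Fp.card : ℝ) * (∑ j' ∈ Jq, A i j') / Jq.card := by
          intro j hj
          have hjq : κ j = q := by simpa [hJq] using hj
          have hconst : (Jq.card : ℝ) * (∑ i' ∈ Fp, A i' j) = ∑ j' ∈ Jq, ∑ i' ∈ Fp, A i' j' := by
            have hcg : ∀ j' ∈ Jq, (∑ i' ∈ Fp, A i' j') = ∑ i' ∈ Fp, A i' j := by
              intro j' hj'
              have hj'q : κ j' = q := by simpa [hJq] using hj'
              have : κ j = κ j' := by rw [hjq, hj'q]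
              exact (hcol j j' this (ρ i)).symm
            rw [Finset.sum_congr rfl hcg, Finset.sum_const, nsmul_eq_mul]
          have hswap : ∑ j' ∈ Jq, ∑ i' ∈ Fp, A i' j' = ∑ i' ∈ Fp, ∑ j' ∈ Jq, A i' j' :=
            Finset.sum_comm
          have hrr : ∑ i' ∈ Fp, ∑ j' ∈ Jq, A i' j' = (Fp.card : ℝ) * ∑ j' ∈ Jq, A i j' := by
            have hrg : ∀ i' ∈ Fp, (∑ j' ∈ Jq, A i' j') = ∑ j' ∈ Jq, A i j' := by
              intro i' hi'
              have : ρ i = ρ i' := by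
                have := (Finset.mem_filter.mp hi').2
                exact this.symm
              exact (hrow i i' this q).symm
            rw [Finset.sum_congr rfl hrg, Finset.sum_const, nsmul_eq_mul]
          have hq0 : (Jq.card : ℝ) ≠ 0 := ne_of_gt (hNq q)
          rw [eq_div_iff hq0, mul_comm (∑ i' ∈ Fp, A i' j) (Jq.card : ℝ), hconst, hswap, hrr]
        rw [Finset.sum_congr rfl (fun j hj => by rw [hCj j hj]), ← Finset.mul_sum]
        have hq0 : ((Jq.card : ℝ)) ≠ 0 := ne_of_gt (hNq q)
        field_simp
      rw [hstep1, hstep2, ← Finset.mul_sum, mul_div_assoc, mul_comm,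
        div_mul_cancel₀ _ (ne_of_gt hFpcard)]
    rw [hkey]
    refine cRel_avg Fp ⟨i, hiFp⟩ _ _ _ (fun i' hi' => ?_)
    have hmem : ρ i' = ρ i := by simpa [hFp] using hi'
    obtain ⟨hb', ho'⟩ := hVconst i' i hmem
    rw [← hb', ← ho']
    exact hx.1 i'
  · intro j
    set F := Finset.univ.filter (fun j' => κ j' = κ j) with hF
    have hjF : j ∈ F := by simp [hF]
    constructor
    · rw [← hl j]
      refine cRel_avg F ⟨j, hjF⟩ x (l j) Ordering.gt (fun j' hj' => ?_)
      have hk : κ j = κ j' := by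
        have : κ j' = κ j := by simpa [hF] using hj'
        exact this.symm
      have hlj : l j = l j' := (hWconst j j' hk).1
      exact hlj ▸ (hx.2 j').1
    · rw [← hu j]
      refine cRel_avg F ⟨j, hjF⟩ x (u j) Ordering.lt (fun j' hj' => ?_)
      have hk : κ j = κ j' := by
        have : κ j' = κ j := by simpa [hF] using hj'
        exact this.symm
      have huj : u j = u j' := (hWconst j j' hk).2
      exact huj ▸ (hx.2 j').2

/-- Objective transfer between two LPs related by a stable partition pair:
`cᵀx = ĉᵀx̂` for feasible `x`; consequently the two WL-indistinguishable LPs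
have the same optimal objective value in `EReal` (`⊤` for infeasible,
`⊥` for unbounded). -/
theorem stmt5 {m n s t : ℕ}
    (A Ahat : Fin m → Fin n → ℝ) (b bhat : Fin m → ℝ)
    (c chat l lhat u uhat : Fin n → ℝ) (o ohat : Fin m → Ordering)
    (ρ : Fin m → Fin s) (κ : Fin n → Fin t)
    (hρ : Function.Surjective ρ) (hκ : Function.Surjective κ)
    (hb : ∀ i, b i = bhat i) (ho : ∀ i, o i = ohat i)
    (hVconst : ∀ i i', ρ i = ρ i' → b i = b i' ∧ o i = o i')
    (hc : ∀ j, c j = chat j) (hl : ∀ j, l j = lhat j) (hu : ∀ j, u j = uhat j)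
    (hWconst : ∀ j j', κ j = κ j' → c j = c j' ∧ l j = l j' ∧ u j = u j')
    (hrow : ∀ i i', ρ i = ρ i' → ∀ q,
      ∑ j ∈ Finset.univ.filter (fun j => κ j = q), A i j =
      ∑ j ∈ Finset.univ.filter (fun j => κ j = q), A i' j)
    (hrowhat : ∀ i q,
      ∑ j ∈ Finset.univ.filter (fun j => κ j = q), A i j =
      ∑ j ∈ Finset.univ.filter (fun j => κ j = q), Ahat i j)
    (hcol : ∀ j j', κ j = κ j' → ∀ p,
      ∑ i ∈ Finset.univ.filter (fun i => ρ i = p), A i j =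
      ∑ i ∈ Finset.univ.filter (fun i => ρ i = p), A i j')
    (hcolhat : ∀ j p,
      ∑ i ∈ Finset.univ.filter (fun i => ρ i = p), A i j =
      ∑ i ∈ Finset.univ.filter (fun i => ρ i = p), Ahat i j) :
    (∀ x : Fin n → ℝ, Feas A b l u o x →
      ∑ j, c j * x j = ∑ j, chat j * blockAvg κ x j) ∧
    sInf ((fun x : Fin n → ℝ => ((∑ j, c j * x j : ℝ) : EReal)) ''
        {x | Feas A b l u o x}) =
      sInf ((fun x : Fin n → ℝ => ((∑ j, chat j * x j : ℝ) : EReal)) ''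
        {x | Feas Ahat bhat lhat uhat ohat x}) := by
  have hWc : ∀ j j', κ j = κ j' → chat j = chat j' := fun j j' h => by
    rw [← hc j, ← hc j']; exact (hWconst j j' h).1
  have hobj : ∀ x : Fin n → ℝ, ∑ j, c j * x j = ∑ j, chat j * blockAvg κ x j := by
    intro x
    rw [avg_dot κ chat x hWc]
    exact Finset.sum_congr rfl (fun j _ => by rw [hc j])
  have hobj2 : ∀ x : Fin n → ℝ, ∑ j, chat j * x j = ∑ j, c j * blockAvg κ x j := by
    intro x
    have hWcc : ∀ j j', κ j = κ j' → c j = c j' := fun j j' h => (hWconst j j' h).1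
    rw [avg_dot κ c x hWcc]
    exact (Finset.sum_congr rfl (fun j _ => by rw [hc j])).symm
  refine ⟨fun x _ => hobj x, ?_⟩
  have hfwd : ∀ x, Feas A b l u o x → Feas Ahat bhat lhat uhat ohat (blockAvg κ x) :=
    fun x hx => feas_transfer A Ahat b bhat l lhat u uhat o ohat ρ κ hκ hb ho hVconst hl hu
      (fun j j' h => ⟨(hWconst j j' h).2.1, (hWconst j j' h).2.2⟩) hrow hrowhat hcol x hx
  have hbwd : ∀ x, Feas Ahat bhat lhat uhat ohat x → Feas A b l u o (blockAvg κ x) := by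
    intro x hx
    refine feas_transfer Ahat A bhat b lhat l uhat u ohat o ρ κ hκ
      (fun i => (hb i).symm) (fun i => (ho i).symm)
      (fun i i' h => by
        obtain ⟨h1, h2⟩ := hVconst i i' h
        exact ⟨by rw [← hb i, ← hb i', h1], by rw [← ho i, ← ho i', h2]⟩)
      (fun j => (hl j).symm) (fun j => (hu j).symm)
      (fun j j' h => by
        obtain ⟨_, h2, h3⟩ := hWconst j j' h
        exact ⟨by rw [← hl j, ← hl j', h2], by rw [← hu j, ← hu j', h3]⟩)
      (fun i i' h q => by rw [← hrowhat i q, ← hrowhat i' q]; exact hrow i i' h q)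
      (fun i q => (hrowhat i q).symm)
      (fun j j' h p => by rw [← hcolhat j p, ← hcolhat j' p]; exact hcol j j' h p)
      x hx
  congr 1
  apply Set.Subset.antisymm
  · rintro _ ⟨x, hx, rfl⟩
    refine ⟨blockAvg κ x, hfwd x hx, ?_⟩
    show ((∑ j, chat j * blockAvg κ x j : ℝ) : EReal) = ((∑ j, c j * x j : ℝ) : EReal)
    exact_mod_cast (hobj x).symm
  · rintro _ ⟨x, hx, rfl⟩
    refine ⟨blockAvg κ x, hbwd x hx, ?_⟩
    show ((∑ j, c j * blockAvg κ x j : ℝ) : EReal) = ((∑ j, chat j * x j : ℝ) : EReal)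
    exact_mod_cast (hobj2 x).symm
end

section
/- Suppose two LPs related by a stable partition pair both have finite optimal value. Let x and x' be their respective optimal solutions of smallest Euclidean norm. Then x = x'. In particular, x is constant on each column block J_q of the stable partition. -/
namespace StmtAux

lemma cRel_div_card {ι : Type*} (s : Finset ι) (hs : s.Nonempty) (o : Ordering) (v : ι → ℝ)
    (b : ℝ) (h : ∀ i ∈ s, cRel o (v i) b) : cRel o ((∑ i ∈ s, v i) / s.card) b := by
  have hc : (0:ℝ) < s.card := by exact_mod_cast Finset.card_pos.mpr hs
  cases o with
  | lt =>
    simp only [cRel] at h ⊢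
    rw [div_le_iff₀ hc]
    calc ∑ i ∈ s, v i ≤ ∑ _i ∈ s, b := Finset.sum_le_sum h
    _ = b * s.card := by rw [Finset.sum_const, nsmul_eq_mul]; ring
  | eq =>
    simp only [cRel] at h ⊢
    rw [div_eq_iff (ne_of_gt hc)]
    calc ∑ i ∈ s, v i = ∑ _i ∈ s, b := Finset.sum_congr rfl h
    _ = b * s.card := by rw [Finset.sum_const, nsmul_eq_mul]; ring
  | gt =>
    simp only [cRel, ge_iff_le] at h ⊢
    rw [le_div_iff₀ hc]
    calc b * s.card = ∑ _i ∈ s, b := by rw [Finset.sum_const, nsmul_eq_mul]; ring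
    _ ≤ ∑ i ∈ s, v i := Finset.sum_le_sum h

lemma cRel_mid (o : Ordering) (a a' b : ℝ) (h : cRel o a b) (h' : cRel o a' b) :
    cRel o ((a + a') / 2) b := by
  cases o <;> simp only [cRel, ge_iff_le] at * <;> linarith

lemma blockAvg_eq {n t : ℕ} (κ : Fin n → Fin t) (x : Fin n → ℝ) {j : Fin n} {q : Fin t}
    (hj : κ j = q) :
    blockAvg κ x j = (∑ j' ∈ Finset.univ.filter (fun j' => κ j' = q), x j') /
      (Finset.univ.filter (fun j' => κ j' = q)).card := by
  simp only [blockAvg, hj]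

end StmtAux

namespace StmtAux

lemma sum_mul_blockAvg {n t : ℕ} (κ : Fin n → Fin t) (B : Fin n → ℝ) (x : Fin n → ℝ) :
    ∑ j, B j * blockAvg κ x j =
    ∑ q, (∑ j ∈ Finset.univ.filter (fun j => κ j = q), B j) *
      ((∑ j ∈ Finset.univ.filter (fun j => κ j = q), x j) /
       (Finset.univ.filter (fun j => κ j = q)).card) := by
  rw [← Finset.sum_fiberwise Finset.univ κ (fun j => B j * blockAvg κ x j)]
  refine Finset.sum_congr rfl fun q _ => ?_
  rw [Finset.sum_mul]
  exact Finset.sum_congr rfl fun j hj => by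
    rw [blockAvg_eq κ x (Finset.mem_filter.1 hj).2]

lemma key_sum {m n s t : ℕ} (Asrc Atgt : Fin m → Fin n → ℝ)
    (ρ : Fin m → Fin s) (κ : Fin n → Fin t) (hκ : Function.Surjective κ)
    (h1 : ∀ i i', ρ i = ρ i' → ∀ q,
      ∑ j ∈ Finset.univ.filter (fun j => κ j = q), Atgt i j =
      ∑ j ∈ Finset.univ.filter (fun j => κ j = q), Asrc i' j)
    (h2 : ∀ j j', κ j = κ j' → ∀ p,
      ∑ i ∈ Finset.univ.filter (fun i => ρ i = p), Asrc i j =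
      ∑ i ∈ Finset.univ.filter (fun i => ρ i = p), Asrc i j')
    (x : Fin n → ℝ) (i : Fin m) :
    ∑ j, Atgt i j * blockAvg κ x j =
      (∑ i' ∈ Finset.univ.filter (fun i' => ρ i' = ρ i), ∑ j, Asrc i' j * x j) /
      (Finset.univ.filter (fun i' => ρ i' = ρ i)).card := by
  classical
  set Ip := Finset.univ.filter (fun i' => ρ i' = ρ i) with hIp
  have hiIp : i ∈ Ip := by simp [hIp]
  have hcardI : (0:ℝ) < (Ip.card : ℝ) := by
    exact_mod_cast Finset.card_pos.mpr ⟨i, hiIp⟩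
  rw [eq_div_iff (ne_of_gt hcardI), sum_mul_blockAvg]
  calc (∑ q, (∑ j ∈ Finset.univ.filter (fun j => κ j = q), Atgt i j) *
      ((∑ j ∈ Finset.univ.filter (fun j => κ j = q), x j) /
        (Finset.univ.filter (fun j => κ j = q)).card)) * (Ip.card : ℝ)
      = ∑ _i' ∈ Ip, ∑ q, (∑ j ∈ Finset.univ.filter (fun j => κ j = q), Atgt i j) *
        ((∑ j ∈ Finset.univ.filter (fun j => κ j = q), x j) /
          (Finset.univ.filter (fun j => κ j = q)).card) := by
        rw [Finset.sum_const, nsmul_eq_mul]; ring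
    _ = ∑ i' ∈ Ip, ∑ q, (∑ j ∈ Finset.univ.filter (fun j => κ j = q), Asrc i' j) *
        ((∑ j ∈ Finset.univ.filter (fun j => κ j = q), x j) /
          (Finset.univ.filter (fun j => κ j = q)).card) := by
        refine Finset.sum_congr rfl fun i' hi' => Finset.sum_congr rfl fun q _ => ?_
        rw [h1 i i' ((Finset.mem_filter.1 hi').2).symm q]
    _ = ∑ q, ∑ i' ∈ Ip, (∑ j ∈ Finset.univ.filter (fun j => κ j = q), Asrc i' j) *
        ((∑ j ∈ Finset.univ.filter (fun j => κ j = q), x j) /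
          (Finset.univ.filter (fun j => κ j = q)).card) := Finset.sum_comm
    _ = ∑ q, (∑ i' ∈ Ip, ∑ j ∈ Finset.univ.filter (fun j => κ j = q), Asrc i' j) *
        ((∑ j ∈ Finset.univ.filter (fun j => κ j = q), x j) /
          (Finset.univ.filter (fun j => κ j = q)).card) := by
        refine Finset.sum_congr rfl fun q _ => ?_
        rw [Finset.sum_mul]
    _ = ∑ q, ∑ j ∈ Finset.univ.filter (fun j => κ j = q),
          (∑ i' ∈ Ip, Asrc i' j) * x j := by
        refine Finset.sum_congr rfl fun q _ => ?_
        obtain ⟨j₀, hj₀⟩ := hκ q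
        have hj₀mem : j₀ ∈ Finset.univ.filter (fun j => κ j = q) := by simp [hj₀]
        have hkq : (0:ℝ) < ((Finset.univ.filter (fun j => κ j = q)).card : ℝ) := by
          exact_mod_cast Finset.card_pos.mpr ⟨j₀, hj₀mem⟩
        have gconst : ∀ j ∈ Finset.univ.filter (fun j => κ j = q),
            (∑ i' ∈ Ip, Asrc i' j) = ∑ i' ∈ Ip, Asrc i' j₀ := by
          intro j hj
          have hκj : κ j = κ j₀ := by
            rw [(Finset.mem_filter.1 hj).2, hj₀]
          exact h2 j j₀ hκj (ρ i)
        have hnum : (∑ i' ∈ Ip, ∑ j ∈ Finset.univ.filter (fun j => κ j = q), Asrc i' j)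
            = ((Finset.univ.filter (fun j => κ j = q)).card : ℝ) * (∑ i' ∈ Ip, Asrc i' j₀) := by
          rw [Finset.sum_comm, Finset.sum_congr rfl gconst, Finset.sum_const, nsmul_eq_mul]
        have hrhs : (∑ j ∈ Finset.univ.filter (fun j => κ j = q), (∑ i' ∈ Ip, Asrc i' j) * x j)
            = (∑ i' ∈ Ip, Asrc i' j₀) * ∑ j ∈ Finset.univ.filter (fun j => κ j = q), x j := by
          rw [Finset.sum_congr rfl (fun j hj => by rw [gconst j hj]), ← Finset.mul_sum]
        rw [hnum, hrhs]
        field_simp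
    _ = ∑ j, (∑ i' ∈ Ip, Asrc i' j) * x j :=
        Finset.sum_fiberwise Finset.univ κ (fun j => (∑ i' ∈ Ip, Asrc i' j) * x j)
    _ = ∑ j, ∑ i' ∈ Ip, Asrc i' j * x j := by
        refine Finset.sum_congr rfl fun j _ => ?_
        rw [Finset.sum_mul]
    _ = ∑ i' ∈ Ip, ∑ j, Asrc i' j * x j := Finset.sum_comm

end StmtAux

namespace StmtAux

lemma feas_blockAvg {m n s t : ℕ} (Asrc Atgt : Fin m → Fin n → ℝ)
    (b : Fin m → ℝ) (l u : Fin n → ℝ) (o : Fin m → Ordering)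
    (ρ : Fin m → Fin s) (κ : Fin n → Fin t) (hκ : Function.Surjective κ)
    (hVconst : ∀ i i', ρ i = ρ i' → b i = b i' ∧ o i = o i')
    (hWconst : ∀ j j', κ j = κ j' → l j = l j' ∧ u j = u j')
    (h1 : ∀ i i', ρ i = ρ i' → ∀ q,
      ∑ j ∈ Finset.univ.filter (fun j => κ j = q), Atgt i j =
      ∑ j ∈ Finset.univ.filter (fun j => κ j = q), Asrc i' j)
    (h2 : ∀ j j', κ j = κ j' → ∀ p,
      ∑ i ∈ Finset.univ.filter (fun i => ρ i = p), Asrc i j =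
      ∑ i ∈ Finset.univ.filter (fun i => ρ i = p), Asrc i j')
    (x : Fin n → ℝ) (hx : Feas Asrc b l u o x) :
    Feas Atgt b l u o (blockAvg κ x) := by
  constructor
  · intro i
    rw [key_sum Asrc Atgt ρ κ hκ h1 h2 x i]
    refine cRel_div_card _ ⟨i, by simp⟩ _ _ _ fun i' hi' => ?_
    have hpi : ρ i' = ρ i := (Finset.mem_filter.1 hi').2
    obtain ⟨hb', ho'⟩ := hVconst i' i hpi
    rw [← hb', ← ho']
    exact hx.1 i'
  · intro j
    have hj : j ∈ Finset.univ.filter (fun j' => κ j' = κ j) := by simp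
    have hkq : (0:ℝ) < ((Finset.univ.filter (fun j' => κ j' = κ j)).card : ℝ) := by
      exact_mod_cast Finset.card_pos.mpr ⟨j, hj⟩
    have hbound : ∀ j' ∈ Finset.univ.filter (fun j' => κ j' = κ j),
        l j ≤ x j' ∧ x j' ≤ u j := by
      intro j' hj'
      have hκj : κ j = κ j' := ((Finset.mem_filter.1 hj').2).symm
      obtain ⟨hl', hu'⟩ := hWconst j j' hκj
      exact ⟨hl' ▸ (hx.2 j').1, hu' ▸ (hx.2 j').2⟩
    constructor
    · show l j ≤ _ / _
      rw [le_div_iff₀ hkq]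
      calc l j * ((Finset.univ.filter (fun j' => κ j' = κ j)).card : ℝ)
          = ∑ _j' ∈ Finset.univ.filter (fun j' => κ j' = κ j), l j := by
            rw [Finset.sum_const, nsmul_eq_mul]; ring
        _ ≤ ∑ j' ∈ Finset.univ.filter (fun j' => κ j' = κ j), x j' :=
            Finset.sum_le_sum fun j' hj' => (hbound j' hj').1
    · show _ / _ ≤ u j
      rw [div_le_iff₀ hkq]
      calc ∑ j' ∈ Finset.univ.filter (fun j' => κ j' = κ j), x j'
          ≤ ∑ _j' ∈ Finset.univ.filter (fun j' => κ j' = κ j), u j :=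
            Finset.sum_le_sum fun j' hj' => (hbound j' hj').2
        _ = u j * ((Finset.univ.filter (fun j' => κ j' = κ j)).card : ℝ) := by
            rw [Finset.sum_const, nsmul_eq_mul]; ring

lemma obj_blockAvg {n t : ℕ} (κ : Fin n → Fin t) (hκ : Function.Surjective κ)
    (c : Fin n → ℝ) (hc : ∀ j j', κ j = κ j' → c j = c j') (x : Fin n → ℝ) :
    ∑ j, c j * blockAvg κ x j = ∑ j, c j * x j := by
  rw [sum_mul_blockAvg, ← Finset.sum_fiberwise Finset.univ κ (fun j => c j * x j)]
  refine Finset.sum_congr rfl fun q _ => ?_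
  obtain ⟨j₀, hj₀⟩ := hκ q
  have hj₀mem : j₀ ∈ Finset.univ.filter (fun j => κ j = q) := by simp [hj₀]
  have hkq : (0:ℝ) < ((Finset.univ.filter (fun j => κ j = q)).card : ℝ) := by
    exact_mod_cast Finset.card_pos.mpr ⟨j₀, hj₀mem⟩
  have hc1 : ∀ j ∈ Finset.univ.filter (fun j => κ j = q), c j = c j₀ := by
    intro j hj
    exact hc j j₀ (by rw [(Finset.mem_filter.1 hj).2, hj₀])
  have e1 : (∑ j ∈ Finset.univ.filter (fun j => κ j = q), c j)
      = ((Finset.univ.filter (fun j => κ j = q)).card : ℝ) * c j₀ := by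
    rw [Finset.sum_congr rfl hc1, Finset.sum_const, nsmul_eq_mul]
  have e2 : (∑ j ∈ Finset.univ.filter (fun j => κ j = q), c j * x j)
      = c j₀ * ∑ j ∈ Finset.univ.filter (fun j => κ j = q), x j := by
    rw [Finset.sum_congr rfl (fun j hj => by rw [hc1 j hj]), ← Finset.mul_sum]
  rw [e1, e2]
  field_simp

lemma aux_div (k S T : ℝ) (hk : 0 < k) (h : S^2 ≤ k * T) : k * (S^2 / k^2) ≤ T := by
  have e : k * (S^2 / k^2) = S^2 / k := by
    field_simp
  rw [e, div_le_iff₀ hk]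
  nlinarith

lemma sum_sq_blockAvg_le {n t : ℕ} (κ : Fin n → Fin t) (hκ : Function.Surjective κ)
    (x : Fin n → ℝ) : ∑ j, (blockAvg κ x j)^2 ≤ ∑ j, (x j)^2 := by
  rw [← Finset.sum_fiberwise Finset.univ κ (fun j => (blockAvg κ x j)^2),
      ← Finset.sum_fiberwise Finset.univ κ (fun j => (x j)^2)]
  refine Finset.sum_le_sum fun q _ => ?_
  obtain ⟨j₀, hj₀⟩ := hκ q
  have hj₀mem : j₀ ∈ Finset.univ.filter (fun j => κ j = q) := by simp [hj₀]
  have hkq : (0:ℝ) < ((Finset.univ.filter (fun j => κ j = q)).card : ℝ) := by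
    exact_mod_cast Finset.card_pos.mpr ⟨j₀, hj₀mem⟩
  have havg : ∀ j ∈ Finset.univ.filter (fun j => κ j = q), (blockAvg κ x j)^2 =
      ((∑ j' ∈ Finset.univ.filter (fun j' => κ j' = q), x j') /
        (Finset.univ.filter (fun j' => κ j' = q)).card)^2 := by
    intro j hj
    rw [blockAvg_eq κ x (Finset.mem_filter.1 hj).2]
  rw [Finset.sum_congr rfl havg, Finset.sum_const, nsmul_eq_mul]
  have CS : (∑ j ∈ Finset.univ.filter (fun j => κ j = q), x j)^2 ≤
      ((Finset.univ.filter (fun j => κ j = q)).card : ℝ) *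
      ∑ j ∈ Finset.univ.filter (fun j => κ j = q), (x j)^2 := by
    have := Finset.sum_mul_sq_le_sq_mul_sq (Finset.univ.filter (fun j => κ j = q))
      (fun _ => (1:ℝ)) x
    simpa using this
  rw [div_pow]
  exact aux_div _ _ _ hkq CS

lemma norm_blockAvg_le {n t : ℕ} (κ : Fin n → Fin t) (hκ : Function.Surjective κ)
    (x xh : EuclideanSpace ℝ (Fin n)) (h : ∀ j, xh j = blockAvg κ x j) : ‖xh‖ ≤ ‖x‖ := by
  rw [EuclideanSpace.norm_eq, EuclideanSpace.norm_eq]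
  apply Real.sqrt_le_sqrt
  calc ∑ j, ‖xh j‖^2 = ∑ j, (blockAvg κ (fun j' => x j') j)^2 := by
        refine Finset.sum_congr rfl fun j _ => ?_
        rw [Real.norm_eq_abs, sq_abs, h j]
    _ ≤ ∑ j, (x j)^2 := sum_sq_blockAvg_le κ hκ _
    _ = ∑ j, ‖x j‖^2 := by
        refine Finset.sum_congr rfl fun j _ => ?_
        rw [Real.norm_eq_abs, sq_abs]

lemma min_norm_unique {E : Type*} [NormedAddCommGroup E] [InnerProductSpace ℝ E]
    (y z : E) (h1 : ‖y‖ = ‖z‖) (h2 : ‖z‖ ≤ ‖(2:ℝ)⁻¹ • (y + z)‖) : y = z := by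
  have hpar := parallelogram_law_with_norm ℝ y z
  have hm : ‖(2:ℝ)⁻¹ • (y + z)‖ = 2⁻¹ * ‖y + z‖ := by
    rw [norm_smul]; norm_num
  have h3 : ‖z‖ ≤ 2⁻¹ * ‖y + z‖ := hm ▸ h2
  have h4 : ‖y - z‖ = 0 := by
    nlinarith [norm_nonneg (y + z), norm_nonneg z, norm_nonneg (y - z),
      sq_nonneg (‖y + z‖ - 2 * ‖z‖)]
  rwa [norm_sub_eq_zero_iff] at h4

lemma sum_mul_mid {n : ℕ} (c y z w : Fin n → ℝ) (hw : ∀ j, w j = (y j + z j)/2) :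
    ∑ j, c j * w j = ((∑ j, c j * y j) + (∑ j, c j * z j))/2 := by
  rw [← Finset.sum_add_distrib, Finset.sum_div]
  refine Finset.sum_congr rfl fun j _ => ?_
  rw [hw]; ring

lemma feas_mid {m n : ℕ} (A : Fin m → Fin n → ℝ) (b : Fin m → ℝ) (l u : Fin n → ℝ)
    (o : Fin m → Ordering) (y z : Fin n → ℝ) (hy : Feas A b l u o y) (hz : Feas A b l u o z)
    (w : Fin n → ℝ) (hw : ∀ j, w j = (y j + z j)/2) : Feas A b l u o w := by
  constructor
  · intro i
    rw [sum_mul_mid (A i) y z w hw]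
    exact cRel_mid _ _ _ _ (hy.1 i) (hz.1 i)
  · intro j
    have h1 := hy.2 j; have h2 := hz.2 j
    rw [hw]
    exact ⟨by linarith [h1.1, h2.1], by linarith [h1.2, h2.2]⟩

end StmtAux

open StmtAux

/-- If two LPs related by a stable partition pair both have finite optimal value,
then their minimal-Euclidean-norm optimal solutions coincide; in particular the
solution is constant on each column block of the stable partition. -/
theorem stmt6 {m n s t : ℕ}
    (A Ahat : Fin m → Fin n → ℝ) (b bhat : Fin m → ℝ)
    (c chat l lhat u uhat : Fin n → ℝ) (o ohat : Fin m → Ordering)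
    (ρ : Fin m → Fin s) (κ : Fin n → Fin t)
    (hρ : Function.Surjective ρ) (hκ : Function.Surjective κ)
    (hb : ∀ i, b i = bhat i) (ho : ∀ i, o i = ohat i)
    (hVconst : ∀ i i', ρ i = ρ i' → b i = b i' ∧ o i = o i')
    (hc : ∀ j, c j = chat j) (hl : ∀ j, l j = lhat j) (hu : ∀ j, u j = uhat j)
    (hWconst : ∀ j j', κ j = κ j' → c j = c j' ∧ l j = l j' ∧ u j = u j')
    (hrow : ∀ i i', ρ i = ρ i' → ∀ q,
      ∑ j ∈ Finset.univ.filter (fun j => κ j = q), A i j =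
      ∑ j ∈ Finset.univ.filter (fun j => κ j = q), A i' j)
    (hrowhat : ∀ i q,
      ∑ j ∈ Finset.univ.filter (fun j => κ j = q), A i j =
      ∑ j ∈ Finset.univ.filter (fun j => κ j = q), Ahat i j)
    (hcol : ∀ j j', κ j = κ j' → ∀ p,
      ∑ i ∈ Finset.univ.filter (fun i => ρ i = p), A i j =
      ∑ i ∈ Finset.univ.filter (fun i => ρ i = p), A i j')
    (hcolhat : ∀ j p,
      ∑ i ∈ Finset.univ.filter (fun i => ρ i = p), A i j =
      ∑ i ∈ Finset.univ.filter (fun i => ρ i = p), Ahat i j)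
    (x x' : EuclideanSpace ℝ (Fin n))
    (hxfeas : Feas A b l u o x)
    (hxopt : ∀ y : EuclideanSpace ℝ (Fin n), Feas A b l u o y →
      ∑ j, c j * x j ≤ ∑ j, c j * y j)
    (hxmin : ∀ y : EuclideanSpace ℝ (Fin n), Feas A b l u o y →
      (∀ z : EuclideanSpace ℝ (Fin n), Feas A b l u o z →
        ∑ j, c j * y j ≤ ∑ j, c j * z j) → ‖x‖ ≤ ‖y‖)
    (hx'feas : Feas Ahat bhat lhat uhat ohat x')
    (hx'opt : ∀ y : EuclideanSpace ℝ (Fin n), Feas Ahat bhat lhat uhat ohat y →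
      ∑ j, chat j * x' j ≤ ∑ j, chat j * y j)
    (hx'min : ∀ y : EuclideanSpace ℝ (Fin n), Feas Ahat bhat lhat uhat ohat y →
      (∀ z : EuclideanSpace ℝ (Fin n), Feas Ahat bhat lhat uhat ohat z →
        ∑ j, chat j * y j ≤ ∑ j, chat j * z j) → ‖x'‖ ≤ ‖y‖) :
    x = x' ∧ ∀ j j', κ j = κ j' → x j = x j' := by
  -- eliminate the hatted data that coincides with the unhatted data
  have hbE : b = bhat := funext hb
  have hoE : o = ohat := funext ho
  have hcE : c = chat := funext hc
  have hlE : l = lhat := funext hl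
  have huE : u = uhat := funext hu
  subst hbE hoE hcE hlE huE
  classical
  have hWlu : ∀ j j', κ j = κ j' → l j = l j' ∧ u j = u j' :=
    fun j j' h => ⟨(hWconst j j' h).2.1, (hWconst j j' h).2.2⟩
  have hWc : ∀ j j', κ j = κ j' → c j = c j' := fun j j' h => (hWconst j j' h).1
  have h2hat : ∀ j j', κ j = κ j' → ∀ p,
      ∑ i ∈ Finset.univ.filter (fun i => ρ i = p), Ahat i j =
      ∑ i ∈ Finset.univ.filter (fun i => ρ i = p), Ahat i j' := by
    intro j j' hjj' p
    rw [← hcolhat j p, ← hcolhat j' p]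
    exact hcol j j' hjj' p
  have h1AhatA : ∀ i i', ρ i = ρ i' → ∀ q,
      ∑ j ∈ Finset.univ.filter (fun j => κ j = q), Ahat i j =
      ∑ j ∈ Finset.univ.filter (fun j => κ j = q), A i' j := by
    intro i i' h q; rw [← hrowhat i q]; exact hrow i i' h q
  have h1AAhat : ∀ i i', ρ i = ρ i' → ∀ q,
      ∑ j ∈ Finset.univ.filter (fun j => κ j = q), A i j =
      ∑ j ∈ Finset.univ.filter (fun j => κ j = q), Ahat i' j := by
    intro i i' h q; rw [← hrowhat i' q]; exact hrow i i' h q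
  have h1AhatAhat : ∀ i i', ρ i = ρ i' → ∀ q,
      ∑ j ∈ Finset.univ.filter (fun j => κ j = q), Ahat i j =
      ∑ j ∈ Finset.univ.filter (fun j => κ j = q), Ahat i' j := by
    intro i i' h q; rw [← hrowhat i q, ← hrowhat i' q]; exact hrow i i' h q
  have Tr1 : ∀ y : Fin n → ℝ, Feas A b l u o y → Feas A b l u o (blockAvg κ y) :=
    fun y hy => feas_blockAvg A A b l u o ρ κ hκ hVconst hWlu hrow hcol y hy
  have Tr2 : ∀ y : Fin n → ℝ, Feas A b l u o y → Feas Ahat b l u o (blockAvg κ y) :=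
    fun y hy => feas_blockAvg A Ahat b l u o ρ κ hκ hVconst hWlu h1AhatA hcol y hy
  have Tr3 : ∀ y : Fin n → ℝ, Feas Ahat b l u o y → Feas A b l u o (blockAvg κ y) :=
    fun y hy => feas_blockAvg Ahat A b l u o ρ κ hκ hVconst hWlu h1AAhat h2hat y hy
  have objEq : ∀ y : Fin n → ℝ, ∑ j, c j * blockAvg κ y j = ∑ j, c j * y j :=
    fun y => obj_blockAvg κ hκ c hWc y
  -- the block average of x, as a point of Euclidean space
  set xh : EuclideanSpace ℝ (Fin n) := WithLp.toLp 2 (blockAvg κ x) with hxhdef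
  have hxhfeasA : Feas A b l u o xh := Tr1 x hxfeas
  have hxhoptA : ∀ z : EuclideanSpace ℝ (Fin n), Feas A b l u o z →
      ∑ j, c j * xh j ≤ ∑ j, c j * z j := by
    intro z hz
    have : ∑ j, c j * xh j = ∑ j, c j * x j := objEq x
    rw [this]
    exact hxopt z hz
  have hn1 : ‖x‖ ≤ ‖xh‖ := hxmin xh hxhfeasA hxhoptA
  have hn2 : ‖xh‖ ≤ ‖x‖ := norm_blockAvg_le κ hκ x xh (fun j => rfl)
  -- midpoint of x and xh is optimal for the first LP
  set m1 : EuclideanSpace ℝ (Fin n) := (2:ℝ)⁻¹ • (x + xh) with hm1def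
  have hm1coord : ∀ j, m1 j = (x j + xh j)/2 := by
    intro j
    show (2:ℝ)⁻¹ * (x j + xh j) = _
    ring
  have hm1feas : Feas A b l u o m1 :=
    feas_mid A b l u o x xh hxfeas hxhfeasA m1 hm1coord
  have hm1opt : ∀ z : EuclideanSpace ℝ (Fin n), Feas A b l u o z →
      ∑ j, c j * m1 j ≤ ∑ j, c j * z j := by
    intro z hz
    rw [sum_mul_mid c x xh m1 hm1coord]
    have e1 := hxopt z hz
    have e2 := hxhoptA z hz
    linarith
  have hn3 : ‖x‖ ≤ ‖m1‖ := hxmin m1 hm1feas hm1opt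
  have hxeq : x = xh := by
    refine min_norm_unique x xh (le_antisymm hn1 hn2) ?_
    rw [← hm1def]
    calc ‖xh‖ ≤ ‖x‖ := hn2
    _ ≤ ‖m1‖ := hn3
  -- x is constant on blocks
  have hblocks : ∀ j j', κ j = κ j' → x j = x j' := by
    intro j j' hjj'
    have e : ∀ j'', x j'' = blockAvg κ x j'' := by
      intro j''
      conv_lhs => rw [hxeq]
    rw [e j, e j']
    simp only [blockAvg, hjj']
  -- x is feasible and optimal for the hatted LP
  have hxfeashat : Feas Ahat b l u o x := by
    rw [hxeq]
    exact Tr2 x hxfeas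
  have hxopthat : ∀ y : EuclideanSpace ℝ (Fin n), Feas Ahat b l u o y →
      ∑ j, c j * x j ≤ ∑ j, c j * y j := by
    intro y hy
    have hfy : Feas A b l u o (blockAvg κ y) := Tr3 y hy
    calc ∑ j, c j * x j ≤ ∑ j, c j * blockAvg κ y j := hxopt (WithLp.toLp 2 (blockAvg κ y)) hfy
    _ = ∑ j, c j * y j := objEq y
  have hn4 : ‖x'‖ ≤ ‖x‖ := hx'min x hxfeashat hxopthat
  -- conversely, the block average of x' is optimal for the first LP
  set xh' : EuclideanSpace ℝ (Fin n) := WithLp.toLp 2 (blockAvg κ x') with hxh'def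
  have hxh'feasA : Feas A b l u o xh' := Tr3 x' hx'feas
  have hxh'optA : ∀ z : EuclideanSpace ℝ (Fin n), Feas A b l u o z →
      ∑ j, c j * xh' j ≤ ∑ j, c j * z j := by
    intro z hz
    have e0 : ∑ j, c j * xh' j = ∑ j, c j * x' j := objEq x'
    rw [e0]
    have hfz : Feas Ahat b l u o (blockAvg κ z) := Tr2 z hz
    calc ∑ j, c j * x' j ≤ ∑ j, c j * blockAvg κ z j := hx'opt (WithLp.toLp 2 (blockAvg κ z)) hfz
    _ = ∑ j, c j * z j := objEq z
  have hn5 : ‖x‖ ≤ ‖xh'‖ := hxmin xh' hxh'feasA hxh'optA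
  have hn6 : ‖xh'‖ ≤ ‖x'‖ := norm_blockAvg_le κ hκ x' xh' (fun j => rfl)
  have hnormeq : ‖x'‖ = ‖x‖ := le_antisymm hn4 (le_trans hn5 hn6)
  -- midpoint of x' and x in the hatted LP
  set m2 : EuclideanSpace ℝ (Fin n) := (2:ℝ)⁻¹ • (x' + x) with hm2def
  have hm2coord : ∀ j, m2 j = (x' j + x j)/2 := by
    intro j
    show (2:ℝ)⁻¹ * (x' j + x j) = _
    ring
  have hm2feas : Feas Ahat b l u o m2 :=
    feas_mid Ahat b l u o x' x hx'feas hxfeashat m2 hm2coord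
  have hm2opt : ∀ z : EuclideanSpace ℝ (Fin n), Feas Ahat b l u o z →
      ∑ j, c j * m2 j ≤ ∑ j, c j * z j := by
    intro z hz
    rw [sum_mul_mid c x' x m2 hm2coord]
    have e1 := hx'opt z hz
    have e2 := hxopthat z hz
    linarith
  have hn7 : ‖x'‖ ≤ ‖m2‖ := hx'min m2 hm2feas hm2opt
  have hfinal : x' = x := by
    refine min_norm_unique x' x hnormeq ?_
    rw [← hm2def]
    calc ‖x‖ = ‖x'‖ := hnormeq.symm
    _ ≤ ‖m2‖ := hn7
  exact ⟨hfinal.symm, hblocks⟩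
end

section
/- The set {(A, b, c, l, u) : the LP min c^T x s.t. Ax ≤ b, l ≤ x ≤ u attains an objective value ≤ φ at some feasible point} is Borel measurable in ℝ^{m×n} × ℝ^m × ℝ^n × ℝ^n × ℝ^n, for every fixed φ ∈ ℝ. Consequently, the optimal objective value mapping Φ_obj(A,b,c,l,u) = inf{c^T x : Ax ≤ b, l ≤ x ≤ u} (with value +∞ on infeasible instances) is a Borel measurable function into ℝ ∪ {±∞}. -/
open Set

/-- Projection of a closed set along a compact box is closed. -/
lemma lp_proj_closed {X : Type*} [TopologicalSpace X] {n : ℕ}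
    {C : Set (X × (Fin n → ℝ))} (hC : IsClosed C) (k : ℝ) :
    IsClosed {x : X | ∃ y : Fin n → ℝ, (∀ j, |y j| ≤ k) ∧ (x, y) ∈ C} := by
  set K : Set (Fin n → ℝ) := Set.Icc (fun _ => -k) (fun _ => k) with hKdef
  have hK : IsCompact K := isCompact_Icc
  haveI : CompactSpace ↥K := isCompact_iff_compactSpace.mp hK
  have hcont : Continuous (fun q : X × ↥K => (q.1, (q.2 : Fin n → ℝ))) :=
    continuous_fst.prodMk (continuous_subtype_val.comp continuous_snd)
  have hC' : IsClosed ((fun q : X × ↥K => (q.1, (q.2 : Fin n → ℝ))) ⁻¹' C) :=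
    hC.preimage hcont
  have hmem : ∀ y : Fin n → ℝ, y ∈ K ↔ ∀ j, |y j| ≤ k := by
    intro y
    simp only [hKdef, Set.mem_Icc, Pi.le_def]
    constructor
    · rintro ⟨h1, h2⟩ j; exact abs_le.2 ⟨h1 j, h2 j⟩
    · intro h; exact ⟨fun j => (abs_le.1 (h j)).1, fun j => (abs_le.1 (h j)).2⟩
  have himg : {x : X | ∃ y : Fin n → ℝ, (∀ j, |y j| ≤ k) ∧ (x, y) ∈ C} =
      Prod.fst '' ((fun q : X × ↥K => (q.1, (q.2 : Fin n → ℝ))) ⁻¹' C) := by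
    ext x
    constructor
    · rintro ⟨y, hy, hxy⟩
      exact ⟨(x, ⟨y, (hmem y).2 hy⟩), hxy, rfl⟩
    · rintro ⟨⟨x', y⟩, hq, rfl⟩
      exact ⟨(y : Fin n → ℝ), (hmem _).1 y.2, hq⟩
  rw [himg]
  exact isClosedMap_fst_of_compactSpace _ hC'

/-- For every `φ ∈ ℝ`, the set of LP data `(A,b,c,l,u)` admitting a feasible
point with objective value `≤ φ` is Borel measurable; consequently the optimal
objective value map `Φ_obj(A,b,c,l,u) = inf {cᵀx : Ax ≤ b, l ≤ x ≤ u}`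
(with value `+∞` on infeasible instances, `−∞` on unbounded ones) is a Borel
measurable function into `ℝ ∪ {±∞}`. -/
theorem stmt11 {m n : ℕ} :
    (∀ φ : ℝ, MeasurableSet {p : (Fin m → Fin n → ℝ) × (Fin m → ℝ) × (Fin n → ℝ) ×
        (Fin n → ℝ) × (Fin n → ℝ) |
      ∃ x : Fin n → ℝ, (∑ j, p.2.2.1 j * x j) ≤ φ ∧
        (∀ i, ∑ j, p.1 i j * x j ≤ p.2.1 i) ∧
        ∀ j, p.2.2.2.1 j ≤ x j ∧ x j ≤ p.2.2.2.2 j}) ∧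
    Measurable (fun p : (Fin m → Fin n → ℝ) × (Fin m → ℝ) × (Fin n → ℝ) ×
        (Fin n → ℝ) × (Fin n → ℝ) =>
      sInf ((fun x : Fin n → ℝ => ((∑ j, p.2.2.1 j * x j : ℝ) : EReal)) ''
        {x | (∀ i, ∑ j, p.1 i j * x j ≤ p.2.1 i) ∧
          ∀ j, p.2.2.2.1 j ≤ x j ∧ x j ≤ p.2.2.2.2 j})) := by
  classical
  -- the type of LP data
  set P := (Fin m → Fin n → ℝ) × (Fin m → ℝ) × (Fin n → ℝ) × (Fin n → ℝ) × (Fin n → ℝ)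
  -- the sublevel set with a feasible witness
  -- closedness of the joint constraint set
  have hCclosed : ∀ φ : ℝ, IsClosed {q : P × (Fin n → ℝ) |
      (∑ j, q.1.2.2.1 j * q.2 j) ≤ φ ∧
      (∀ i, ∑ j, q.1.1 i j * q.2 j ≤ q.1.2.1 i) ∧
      ∀ j, q.1.2.2.2.1 j ≤ q.2 j ∧ q.2 j ≤ q.1.2.2.2.2 j} := by
    intro φ
    have h1 : IsClosed {q : P × (Fin n → ℝ) | (∑ j, q.1.2.2.1 j * q.2 j) ≤ φ} :=
      isClosed_le (by dsimp only [P]; fun_prop) continuous_const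
    have h2 : IsClosed {q : P × (Fin n → ℝ) |
        ∀ i, ∑ j, q.1.1 i j * q.2 j ≤ q.1.2.1 i} := by
      rw [Set.setOf_forall]
      exact isClosed_iInter fun i => isClosed_le (by dsimp only [P]; fun_prop) (by dsimp only [P]; fun_prop)
    have h3 : IsClosed {q : P × (Fin n → ℝ) |
        ∀ j, q.1.2.2.2.1 j ≤ q.2 j ∧ q.2 j ≤ q.1.2.2.2.2 j} := by
      rw [Set.setOf_forall]
      refine isClosed_iInter fun j => ?_
      rw [Set.setOf_and]
      exact (isClosed_le (by dsimp only [P]; fun_prop) (by dsimp only [P]; fun_prop)).inter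
        (isClosed_le (by dsimp only [P]; fun_prop) (by dsimp only [P]; fun_prop))
    have : {q : P × (Fin n → ℝ) |
        (∑ j, q.1.2.2.1 j * q.2 j) ≤ φ ∧
        (∀ i, ∑ j, q.1.1 i j * q.2 j ≤ q.1.2.1 i) ∧
        ∀ j, q.1.2.2.2.1 j ≤ q.2 j ∧ q.2 j ≤ q.1.2.2.2.2 j} =
        {q : P × (Fin n → ℝ) | (∑ j, q.1.2.2.1 j * q.2 j) ≤ φ} ∩
        ({q : P × (Fin n → ℝ) | ∀ i, ∑ j, q.1.1 i j * q.2 j ≤ q.1.2.1 i} ∩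
         {q : P × (Fin n → ℝ) | ∀ j, q.1.2.2.2.1 j ≤ q.2 j ∧ q.2 j ≤ q.1.2.2.2.2 j}) := by
      ext q; simp [Set.mem_setOf_eq, and_assoc]
    rw [this]
    exact h1.inter (h2.inter h3)
  -- Part 1 : measurability of the sublevel sets
  have hS : ∀ φ : ℝ, MeasurableSet {p : P |
      ∃ x : Fin n → ℝ, (∑ j, p.2.2.1 j * x j) ≤ φ ∧
        (∀ i, ∑ j, p.1 i j * x j ≤ p.2.1 i) ∧
        ∀ j, p.2.2.2.1 j ≤ x j ∧ x j ≤ p.2.2.2.2 j} := by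
    intro φ
    have hunion : {p : P |
        ∃ x : Fin n → ℝ, (∑ j, p.2.2.1 j * x j) ≤ φ ∧
          (∀ i, ∑ j, p.1 i j * x j ≤ p.2.1 i) ∧
          ∀ j, p.2.2.2.1 j ≤ x j ∧ x j ≤ p.2.2.2.2 j} =
        ⋃ k : ℕ, {p : P | ∃ x : Fin n → ℝ, (∀ j, |x j| ≤ (k : ℝ)) ∧
          ((p, x) ∈ {q : P × (Fin n → ℝ) |
            (∑ j, q.1.2.2.1 j * q.2 j) ≤ φ ∧
            (∀ i, ∑ j, q.1.1 i j * q.2 j ≤ q.1.2.1 i) ∧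
            ∀ j, q.1.2.2.2.1 j ≤ q.2 j ∧ q.2 j ≤ q.1.2.2.2.2 j})} := by
      ext p
      simp only [Set.mem_iUnion, Set.mem_setOf_eq]
      constructor
      · rintro ⟨x, hx⟩
        obtain ⟨k, hk⟩ := exists_nat_ge (∑ j, |x j|)
        refine ⟨k, x, fun j => ?_, hx⟩
        exact le_trans (Finset.single_le_sum (fun j _ => abs_nonneg (x j))
          (Finset.mem_univ j)) hk
      · rintro ⟨k, x, _, hx⟩
        exact ⟨x, hx⟩
    rw [hunion]
    exact MeasurableSet.iUnion fun k =>
      (lp_proj_closed (hCclosed φ) (k : ℝ)).measurableSet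
  refine ⟨hS, ?_⟩
  -- Part 2 : measurability of the optimal value map
  set Φ : P → EReal := fun p =>
      sInf ((fun x : Fin n → ℝ => ((∑ j, p.2.2.1 j * x j : ℝ) : EReal)) ''
        {x | (∀ i, ∑ j, p.1 i j * x j ≤ p.2.1 i) ∧
          ∀ j, p.2.2.2.1 j ≤ x j ∧ x j ≤ p.2.2.2.2 j}) with hΦdef
  -- key equivalence: sublevel sets of Φ at real levels are the witness sets
  have hiff : ∀ (p : P) (r : ℝ), Φ p ≤ (r : EReal) ↔
      ∃ x : Fin n → ℝ, (∑ j, p.2.2.1 j * x j) ≤ r ∧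
        (∀ i, ∑ j, p.1 i j * x j ≤ p.2.1 i) ∧
        ∀ j, p.2.2.2.1 j ≤ x j ∧ x j ≤ p.2.2.2.2 j := by
    intro p r
    set F : Set (Fin n → ℝ) := {x | (∀ i, ∑ j, p.1 i j * x j ≤ p.2.1 i) ∧
        ∀ j, p.2.2.2.1 j ≤ x j ∧ x j ≤ p.2.2.2.2 j} with hFdef
    have hcontObj : Continuous fun x : Fin n → ℝ => ∑ j, p.2.2.1 j * x j := by fun_prop
    constructor
    · -- from Φ p ≤ r, exhibit a feasible minimizer
      intro hle
      have hne : F.Nonempty := by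
        by_contra hne
        rw [Set.not_nonempty_iff_eq_empty] at hne
        simp only [hFdef] at hne
        simp only [hΦdef, hne, Set.image_empty, sInf_empty] at hle
        exact absurd hle (by simp)
      have hFclosed : IsClosed F := by
        have h2 : IsClosed {x : Fin n → ℝ | ∀ i, ∑ j, p.1 i j * x j ≤ p.2.1 i} := by
          rw [Set.setOf_forall]
          exact isClosed_iInter fun i => isClosed_le (by fun_prop) continuous_const
        have h3 : IsClosed {x : Fin n → ℝ |
            ∀ j, p.2.2.2.1 j ≤ x j ∧ x j ≤ p.2.2.2.2 j} := by
          rw [Set.setOf_forall]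
          refine isClosed_iInter fun j => ?_
          rw [Set.setOf_and]
          exact (isClosed_le continuous_const (continuous_apply j)).inter
            (isClosed_le (continuous_apply j) continuous_const)
        have : F = {x : Fin n → ℝ | ∀ i, ∑ j, p.1 i j * x j ≤ p.2.1 i} ∩
            {x : Fin n → ℝ | ∀ j, p.2.2.2.1 j ≤ x j ∧ x j ≤ p.2.2.2.2 j} := rfl
        rw [this]; exact h2.inter h3
      have hsub : F ⊆ Set.Icc p.2.2.2.1 p.2.2.2.2 := by
        rintro x ⟨_, hx⟩
        exact ⟨fun j => (hx j).1, fun j => (hx j).2⟩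
      have hFcompact : IsCompact F :=
        IsCompact.of_isClosed_subset isCompact_Icc hFclosed hsub
      obtain ⟨x₀, hx₀F, hmin⟩ := hFcompact.exists_isMinOn hne hcontObj.continuousOn
      have heq : Φ p = ((∑ j, p.2.2.1 j * x₀ j : ℝ) : EReal) := by
        rw [hΦdef]
        refine le_antisymm (sInf_le ⟨x₀, hx₀F, rfl⟩) (le_sInf ?_)
        rintro b ⟨x, hxF, rfl⟩
        exact EReal.coe_le_coe_iff.2 (hmin hxF)
      rw [heq] at hle
      exact ⟨x₀, EReal.coe_le_coe_iff.1 hle, hx₀F.1, hx₀F.2⟩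
    · rintro ⟨x, hobj, hfeas⟩
      calc Φ p ≤ ((∑ j, p.2.2.1 j * x j : ℝ) : EReal) := sInf_le ⟨x, hfeas, rfl⟩
        _ ≤ (r : EReal) := EReal.coe_le_coe_iff.2 hobj
  -- conclude measurability from measurability of preimages of `Iic`
  refine measurable_of_Iic fun a => ?_
  induction a using EReal.rec with
  | top =>
    have : Φ ⁻¹' Set.Iic (⊤ : EReal) = Set.univ := by
      ext p; simp [Set.mem_preimage, le_top]
    rw [this]; exact MeasurableSet.univ
  | coe r =>
    have : Φ ⁻¹' Set.Iic ((r : ℝ) : EReal) = {p : P |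
        ∃ x : Fin n → ℝ, (∑ j, p.2.2.1 j * x j) ≤ r ∧
          (∀ i, ∑ j, p.1 i j * x j ≤ p.2.1 i) ∧
          ∀ j, p.2.2.2.1 j ≤ x j ∧ x j ≤ p.2.2.2.2 j} := by
      ext p
      simp only [Set.mem_preimage, Set.mem_Iic, Set.mem_setOf_eq]
      exact hiff p r
    rw [this]; exact hS r
  | bot =>
    have : Φ ⁻¹' Set.Iic (⊥ : EReal) = ⋂ k : ℕ, {p : P |
        ∃ x : Fin n → ℝ, (∑ j, p.2.2.1 j * x j) ≤ (-(k : ℝ)) ∧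
          (∀ i, ∑ j, p.1 i j * x j ≤ p.2.1 i) ∧
          ∀ j, p.2.2.2.1 j ≤ x j ∧ x j ≤ p.2.2.2.2 j} := by
      ext p
      simp only [Set.mem_preimage, Set.mem_Iic, Set.mem_iInter, Set.mem_setOf_eq,
        le_bot_iff]
      constructor
      · intro h k
        exact (hiff p (-(k : ℝ))).1 (by rw [h]; exact bot_le)
      · intro h
        have h' : ∀ k : ℕ, Φ p ≤ ((-(k : ℝ) : ℝ) : EReal) := fun k =>
          (hiff p (-(k : ℝ))).2 (h k)
        rw [EReal.eq_bot_iff_forall_lt]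
        intro y
        obtain ⟨k, hk⟩ := exists_nat_gt (-y)
        calc Φ p ≤ ((-(k : ℝ) : ℝ) : EReal) := h' k
          _ < (y : EReal) := by
            rw [EReal.coe_lt_coe_iff]; linarith
    rw [this]
    exact MeasurableSet.iInter fun k => hS (-(k : ℝ))
end
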